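/- Let ξ : ℤ → {0,1} be a non-periodic Toeplitz sequence with period structure (p_ℓ)_{ℓ≥1}, Ω the associated odometer with Haar probability measure μ, and W = cl(U) the window constructed from ξ. Then lim_{ℓ→∞} D(p_ℓ) = 1 if and only if μ(∂W) = 0; that is, ξ is a regular Toeplitz sequence if and only if the boundary of the window W has Haar measure zero. -/

import Mathlib

open MeasureTheory Set Filter Topology

noncomputable section

instance (n : ℕ) : TopologicalSpace (ZMod n) := ⊥
instance (n : ℕ) : DiscreteTopology (ZMod n) := ⟨rfl⟩
instance (n : ℕ) : MeasurableSpace (ZMod n) := ⊤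

/-- The `p`-skeleton of a sequence `ξ : ℤ → {0,1}`:
the set of `p`-periodic positions of `ξ`. -/
def Per (ξ : ℤ → Fin 2) (p : ℕ) : Set ℤ := {k | ∀ n : ℤ, ξ (k + n * p) = ξ k}

/-- The density `D(p)` of the `p`-skeleton:
`D(p) = #(Per(p,ξ) ∩ [0, p-1]) / p`. -/
def skelDensity (ξ : ℤ → Fin 2) (p : ℕ) : ℝ :=
  ((Per ξ p ∩ Set.Ico (0 : ℤ) (p : ℤ)).ncard : ℝ) / p

/-- `ξ` is a Toeplitz sequence: every position is periodic for some period `p ≥ 1`. -/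
def IsToeplitz (ξ : ℤ → Fin 2) : Prop := ∀ k : ℤ, ∃ p : ℕ, 0 < p ∧ k ∈ Per ξ p

/-- `ξ` is non-periodic: no `p ≥ 1` is a period of the whole sequence. -/
def IsNonPeriodic (ξ : ℤ → Fin 2) : Prop := ∀ p : ℕ, 0 < p → ∃ k : ℤ, ξ (k + p) ≠ ξ k

/-- `(p ℓ)` is a period structure for `ξ`: the `p ℓ` are positive, each divides the
next, and the `p ℓ`-skeletons exhaust `ℤ`. -/
def IsPeriodStructure (ξ : ℤ → Fin 2) (p : ℕ → ℕ) : Prop :=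
  (∀ ℓ, 0 < p ℓ) ∧ (∀ ℓ, p ℓ ∣ p (ℓ + 1)) ∧ ∀ k : ℤ, ∃ ℓ, k ∈ Per ξ (p ℓ)

/-- The odometer associated with a scale `p`, i.e. the closed subgroup of
`∏ ℓ, ℤ/p ℓ ℤ` of sequences compatible under the canonical projections
(whenever `p ℓ ∣ p (ℓ+1)`, which holds for period structures). -/
def odometer (p : ℕ → ℕ) : AddSubgroup (Π ℓ, ZMod (p ℓ)) where
  carrier := {x | ∀ ℓ, ∀ h : p ℓ ∣ p (ℓ + 1), ZMod.castHom h (ZMod (p ℓ)) (x (ℓ + 1)) = x ℓ}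
  zero_mem' := by intro ℓ _; simp
  add_mem' := by intro a b ha hb ℓ h; simp only [Pi.add_apply, map_add, ha ℓ h, hb ℓ h]
  neg_mem' := by intro a ha ℓ h; simp only [Pi.neg_apply, map_neg, ha ℓ h]

/-- The distinguished element `e` of the odometer, whose `ℓ`-th coordinate is
`1 mod p ℓ`; its `n`-th multiple `n • e` has `ℓ`-th coordinate `n mod p ℓ`. -/
def odometerGen (p : ℕ → ℕ) : odometer p := ⟨fun _ => 1, fun _ _ => map_one _⟩

/-- `A_s(ℓ) = {k mod p ℓ : k ∈ Per (p ℓ, ξ), ξ k = s} ⊆ ℤ/p ℓ ℤ`. -/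
def Aset (ξ : ℤ → Fin 2) (p : ℕ → ℕ) (ℓ : ℕ) (s : Fin 2) : Set (ZMod (p ℓ)) :=
  {c | ∃ k : ℤ, k ∈ Per ξ (p ℓ) ∧ ξ k = s ∧ (k : ZMod (p ℓ)) = c}

/-- `U_ℓ = {x ∈ Ω : x ℓ ∈ A_1(ℓ)}`. -/
def UsetL (ξ : ℤ → Fin 2) (p : ℕ → ℕ) (ℓ : ℕ) : Set (odometer p) :=
  {x | (x : Π ℓ, ZMod (p ℓ)) ℓ ∈ Aset ξ p ℓ 1}

/-- `V_ℓ = {x ∈ Ω : x ℓ ∈ A_0(ℓ)}`. -/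
def VsetL (ξ : ℤ → Fin 2) (p : ℕ → ℕ) (ℓ : ℕ) : Set (odometer p) :=
  {x | (x : Π ℓ, ZMod (p ℓ)) ℓ ∈ Aset ξ p ℓ 0}

/-- `U = ⋃ ℓ, U_ℓ`. -/
def Uset (ξ : ℤ → Fin 2) (p : ℕ → ℕ) : Set (odometer p) := ⋃ ℓ, UsetL ξ p ℓ

/-- `V = ⋃ ℓ, V_ℓ`. -/
def Vset (ξ : ℤ → Fin 2) (p : ℕ → ℕ) : Set (odometer p) := ⋃ ℓ, VsetL ξ p ℓ

/-- The window `W = cl(U)` constructed from `ξ`. -/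
def Wset (ξ : ℤ → Fin 2) (p : ℕ → ℕ) : Set (odometer p) := closure (Uset ξ p)

section Aux

variable {ξ : ℤ → Fin 2} {p : ℕ → ℕ}

/-- shifts of a `q`-periodic position are `q`-periodic with the same value -/
lemma per_add_mul {q : ℕ} {k : ℤ} (hk : k ∈ Per ξ q) (n : ℤ) :
    k + n * q ∈ Per ξ q ∧ ξ (k + n * q) = ξ k := by
  refine ⟨fun m => ?_, hk n⟩
  have h1 := hk (n + m)
  have h2 := hk n
  rw [show k + n * q + m * q = k + (n + m) * q by ring, h1, h2]

lemma Per.mono {q r : ℕ} (h : q ∣ r) : Per ξ q ⊆ Per ξ r := by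
  rcases h with ⟨t, rfl⟩
  intro k hk n
  have := hk (n * t)
  rw [show k + n * (↑(q * t)) = k + (n * t) * q by push_cast; ring]
  exact this

lemma cast_eq_cast_iff_per {q : ℕ} {k k' : ℤ} (hk : k ∈ Per ξ q)
    (h : (k : ZMod q) = (k' : ZMod q)) : k' ∈ Per ξ q ∧ ξ k' = ξ k := by
  have hd : (q : ℤ) ∣ k' - k := ((ZMod.intCast_eq_intCast_iff _ _ _).mp h).dvd
  rcases hd with ⟨n, hn⟩
  have : k' = k + n * q := by linarith
  rw [this]
  exact per_add_mul hk n

/-- an element of the odometer -/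
def odoInt (p : ℕ → ℕ) (k : ℤ) : odometer p :=
  ⟨fun j => (k : ZMod (p j)), fun ℓ h => map_intCast (ZMod.castHom h (ZMod (p ℓ))) k⟩

lemma odometer_compat (x : odometer p) (ℓ : ℕ) (h : p ℓ ∣ p (ℓ + 1)) :
    ZMod.castHom h (ZMod (p ℓ)) ((x : Π j, ZMod (p j)) (ℓ + 1)) = (x : Π j, ZMod (p j)) ℓ :=
  x.2 ℓ h

lemma cast_coord (hdvd : ∀ ℓ, p ℓ ∣ p (ℓ + 1)) (x : odometer p) {i j : ℕ} (hij : i ≤ j)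
    {k : ℤ} (hk : (k : ZMod (p j)) = (x : Π j, ZMod (p j)) j) :
    (k : ZMod (p i)) = (x : Π j, ZMod (p j)) i := by
  induction j with
  | zero => exact (Nat.le_zero.mp hij) ▸ hk
  | succ j ih =>
    rcases Nat.eq_or_lt_of_le hij with h | h
    · exact h ▸ hk
    · refine ih (Nat.lt_succ_iff.mp h) ?_
      have h1 := odometer_compat x j (hdvd j)
      rw [← hk, map_intCast] at h1
      exact h1

lemma coord_coord (hdvd : ∀ ℓ, p ℓ ∣ p (ℓ + 1)) (x y : odometer p) {i j : ℕ} (hij : i ≤ j)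
    (h : (x : Π j, ZMod (p j)) j = (y : Π j, ZMod (p j)) j) :
    (x : Π j, ZMod (p j)) i = (y : Π j, ZMod (p j)) i := by
  obtain ⟨k, hk⟩ := ZMod.intCast_surjective ((x : Π j, ZMod (p j)) j)
  rw [← cast_coord hdvd x hij hk, cast_coord hdvd y hij (hk.trans h)]

lemma proj_continuous (p : ℕ → ℕ) (ℓ : ℕ) :
    Continuous (fun x : odometer p => (x : Π j, ZMod (p j)) ℓ) :=
  (continuous_apply ℓ).comp continuous_subtype_val

lemma proj_measurable (p : ℕ → ℕ) (ℓ : ℕ) :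
    Measurable (fun x : odometer p => (x : Π j, ZMod (p j)) ℓ) :=
  (measurable_pi_apply ℓ).comp measurable_subtype_coe

/-- the cylinder sets form a neighborhood basis -/
lemma exists_cylinder_subset (hdvd : ∀ ℓ, p ℓ ∣ p (ℓ + 1)) {O : Set (odometer p)}
    (hO : IsOpen O) {x : odometer p} (hx : x ∈ O) :
    ∃ ℓ, ∀ y : odometer p,
      (y : Π j, ZMod (p j)) ℓ = (x : Π j, ZMod (p j)) ℓ → y ∈ O := by
  obtain ⟨O', hO', rfl⟩ := isOpen_induced_iff.mp hO
  obtain ⟨I, u, h1, h2⟩ := isOpen_pi_iff.mp hO' _ hx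
  refine ⟨I.sup id, fun y hy => ?_⟩
  refine h2 ?_
  intro a ha
  have : (y : Π j, ZMod (p j)) a = (x : Π j, ZMod (p j)) a :=
    coord_coord hdvd y x (Finset.le_sup (f := id) ha) hy
  rw [this]
  exact (h1 a ha).2

lemma fin2_cases (a : Fin 2) : a = 0 ∨ a = 1 := by omega

/-- if no element of the residue class of `c` is `p ℓ`-periodic, then `ξ` takes
both values on that class -/
lemma exists_lift_val {ℓ : ℕ} {c : ZMod (p ℓ)}
    (hc : ∀ k : ℤ, (k : ZMod (p ℓ)) = c → k ∉ Per ξ (p ℓ)) (s : Fin 2) :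
    ∃ k : ℤ, (k : ZMod (p ℓ)) = c ∧ ξ k = s := by
  by_contra hcon
  push_neg at hcon
  obtain ⟨k0, hk0⟩ := ZMod.intCast_surjective (n := p ℓ) c
  refine hc k0 hk0 (fun n => ?_)
  have hmem : ((k0 + n * p ℓ : ℤ) : ZMod (p ℓ)) = c := by
    push_cast [ZMod.natCast_self]
    rw [mul_zero, add_zero, hk0]
  have h1 := hcon _ hmem
  have h2 := hcon _ hk0
  rcases fin2_cases s with rfl | rfl <;>
  · rcases fin2_cases (ξ (k0 + n * p ℓ)) with ha | ha <;>
    rcases fin2_cases (ξ k0) with hb | hb <;> simp_all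

end Aux

section Main

variable {ξ : ℤ → Fin 2} {p : ℕ → ℕ}

lemma USopen (ξ : ℤ → Fin 2) (p : ℕ → ℕ) (ℓ : ℕ) (s : Fin 2) :
    IsOpen {x : odometer p | (x : Π ℓ, ZMod (p ℓ)) ℓ ∈ Aset ξ p ℓ s} :=
  (isOpen_discrete _).preimage (proj_continuous p ℓ)

lemma Uopen (ξ : ℤ → Fin 2) (p : ℕ → ℕ) : IsOpen (Uset ξ p) :=
  isOpen_iUnion (fun ℓ => USopen ξ p ℓ 1)

lemma Vopen (ξ : ℤ → Fin 2) (p : ℕ → ℕ) : IsOpen (Vset ξ p) :=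
  isOpen_iUnion (fun ℓ => USopen ξ p ℓ 0)

/-- values at compatible skeleton positions across levels agree -/
lemma UV_disj_aux (hdvd : ∀ ℓ, p ℓ ∣ p (ℓ + 1)) {x : odometer p} {ℓ m : ℕ} (hlm : ℓ ≤ m)
    {k k' : ℤ} (hk : k ∈ Per ξ (p ℓ)) (hkc : (k : ZMod (p ℓ)) = (x : Π j, ZMod (p j)) ℓ)
    (hkc' : (k' : ZMod (p m)) = (x : Π j, ZMod (p j)) m) : ξ k' = ξ k := by
  have h1 : (k' : ZMod (p ℓ)) = (x : Π j, ZMod (p j)) ℓ := cast_coord hdvd x hlm hkc'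
  exact (cast_eq_cast_iff_per hk (hkc.trans h1.symm)).2

lemma UV_disjoint (hdvd : ∀ ℓ, p ℓ ∣ p (ℓ + 1)) : Uset ξ p ∩ Vset ξ p = ∅ := by
  ext x
  simp only [Set.mem_inter_iff, Set.mem_empty_iff_false, iff_false, not_and]
  intro hU hV
  obtain ⟨ℓ, k, hk, hk1, hkc⟩ := Set.mem_iUnion.mp hU
  obtain ⟨m, k', hk', hk0, hkc'⟩ := Set.mem_iUnion.mp hV
  rcases le_total ℓ m with h | h
  · have := UV_disj_aux hdvd h hk hkc hkc'
    rw [hk0, hk1] at this; exact absurd this (by decide)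
  · have := UV_disj_aux hdvd h hk' hkc' hkc
    rw [hk0, hk1] at this; exact absurd this (by decide)

/-- a point outside `U ∪ V` is in the closure of both `U` and `V` -/
lemma mem_closure_of_notUV (hpos : ∀ ℓ, 0 < p ℓ) (hdvd : ∀ ℓ, p ℓ ∣ p (ℓ + 1))
    (hexh : ∀ k : ℤ, ∃ ℓ, k ∈ Per ξ (p ℓ)) {x : odometer p}
    (hx : x ∉ Uset ξ p ∪ Vset ξ p) (s : Fin 2) :
    x ∈ closure {y : odometer p | ∃ ℓ, (y : Π j, ZMod (p j)) ℓ ∈ Aset ξ p ℓ s} := by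
  rw [mem_closure_iff]
  intro O hO hxO
  obtain ⟨ℓ, hℓ⟩ := exists_cylinder_subset hdvd hO hxO
  -- no integer in the class of `x ℓ` is `p ℓ`-periodic
  have hc : ∀ k : ℤ, (k : ZMod (p ℓ)) = (x : Π j, ZMod (p j)) ℓ → k ∉ Per ξ (p ℓ) := by
    intro k hkc hk
    rcases fin2_cases (ξ k) with h | h
    · exact hx (Or.inr (Set.mem_iUnion.mpr ⟨ℓ, k, hk, h, hkc⟩))
    · exact hx (Or.inl (Set.mem_iUnion.mpr ⟨ℓ, k, hk, h, hkc⟩))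
  obtain ⟨k, hkc, hks⟩ := exists_lift_val hc s
  obtain ⟨m, hm⟩ := hexh k
  refine ⟨odoInt p k, hℓ _ hkc, ?_⟩
  refine ⟨max ℓ m, k, Per.mono (?_ : p m ∣ p (max ℓ m)) hm, hks, rfl⟩
  clear hkc hks hm
  -- divisibility along the chain
  have : ∀ i j : ℕ, i ≤ j → p i ∣ p j := by
    intro i j hij
    induction j with
    | zero => exact (Nat.le_zero.mp hij) ▸ dvd_rfl
    | succ j ih =>
      rcases Nat.eq_or_lt_of_le hij with h | h
      · exact h ▸ dvd_rfl
      · exact (ih (Nat.lt_succ_iff.mp h)).trans (hdvd j)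
  exact this m _ (le_max_right ℓ m)

lemma frontier_Wset (hpos : ∀ ℓ, 0 < p ℓ) (hdvd : ∀ ℓ, p ℓ ∣ p (ℓ + 1))
    (hexh : ∀ k : ℤ, ∃ ℓ, k ∈ Per ξ (p ℓ)) :
    frontier (Wset ξ p) = (Uset ξ p ∪ Vset ξ p)ᶜ := by
  have hVW : Vset ξ p ∩ Wset ξ p = ∅ := by
    have := (Vopen ξ p).inter_closure (t := Uset ξ p)
    rw [Set.inter_comm (Vset ξ p) (Uset ξ p), UV_disjoint hdvd, closure_empty] at this
    exact Set.subset_empty_iff.mp this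
  ext x
  simp only [Set.mem_compl_iff, Set.mem_union]
  constructor
  · intro hf
    push_neg
    constructor
    · intro hU
      exact hf.2 (interior_maximal subset_closure (Uopen ξ p) hU)
    · intro hV
      have hxW : x ∈ Wset ξ p := by
        have := hf.1
        rwa [show Wset ξ p = closure (Uset ξ p) from rfl, closure_closure] at this
      exact absurd (Set.mem_inter hV hxW) (by rw [hVW]; exact id)
  · intro hx
    have hx' : x ∉ Uset ξ p ∪ Vset ξ p := by
      simpa only [Set.mem_union] using hx
    constructor
    · -- x ∈ closure U
      have := mem_closure_of_notUV hpos hdvd hexh hx' 1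
      have hsub : {y : odometer p | ∃ ℓ, (y : Π j, ZMod (p j)) ℓ ∈ Aset ξ p ℓ 1} ⊆ Uset ξ p := by
        rintro y ⟨ℓ, hy⟩
        exact Set.mem_iUnion.mpr ⟨ℓ, hy⟩
      show x ∈ closure (Wset ξ p)
      rw [show Wset ξ p = closure (Uset ξ p) from rfl, closure_closure]
      exact closure_mono hsub this
    · -- x ∉ interior W
      intro hint
      have hcl := mem_closure_of_notUV hpos hdvd hexh hx' 0
      rw [mem_closure_iff] at hcl
      obtain ⟨y, hyI, hyV⟩ := hcl _ isOpen_interior hint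
      have hyW : y ∈ Wset ξ p := interior_subset hyI
      have hyV' : y ∈ Vset ξ p := by
        obtain ⟨ℓ, h⟩ := hyV
        exact Set.mem_iUnion.mpr ⟨ℓ, h⟩
      exact absurd (Set.mem_inter hyV' hyW) (by rw [hVW]; exact id)

end Main

section Meas

open scoped ENNReal

variable {ξ : ℤ → Fin 2} {p : ℕ → ℕ}

lemma measurable_translate (g : odometer p) :
    Measurable (fun x : odometer p => g + x) := by
  have h : Measurable (fun x : odometer p => ((g : Π j, ZMod (p j)) + (x : Π j, ZMod (p j)))) := by
    rw [measurable_pi_iff]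
    intro ℓ
    exact measurable_from_top.comp (proj_measurable p ℓ)
  exact Measurable.subtype_mk h (h := fun x => add_mem g.2 x.2)

/-- the cylinder sets -/
def Cyl (p : ℕ → ℕ) (ℓ : ℕ) (c : ZMod (p ℓ)) : Set (odometer p) :=
  {x | (x : Π j, ZMod (p j)) ℓ = c}

lemma Cyl_measurable (p : ℕ → ℕ) (ℓ : ℕ) (c : ZMod (p ℓ)) : MeasurableSet (Cyl p ℓ c) :=
  proj_measurable p ℓ (show MeasurableSet {c} from trivial)

lemma Cyl_measure_eq (μ : Measure (odometer p)) (hμ : μ.IsAddHaarMeasure)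
    (ℓ : ℕ) (c d : ZMod (p ℓ)) : μ (Cyl p ℓ c) = μ (Cyl p ℓ d) := by
  haveI := hμ
  obtain ⟨k, hk⟩ := ZMod.intCast_surjective (n := p ℓ) (c - d)
  set g : odometer p := odoInt p k with hg
  have hmap : Measure.map (fun x => g + x) μ = μ := map_add_left_eq_self μ g
  have hpre : (fun x : odometer p => g + x) ⁻¹' (Cyl p ℓ c) = Cyl p ℓ d := by
    ext x
    simp only [Cyl, Set.mem_preimage, Set.mem_setOf_eq]
    have hco : ((g + x : odometer p) : Π j, ZMod (p j)) ℓ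
        = (k : ZMod (p ℓ)) + (x : Π j, ZMod (p j)) ℓ := rfl
    rw [hco, hk]
    constructor
    · intro h
      have : (x : Π j, ZMod (p j)) ℓ = d := by linear_combination h
      exact this
    · rintro rfl; ring
  calc μ (Cyl p ℓ c) = (Measure.map (fun x => g + x) μ) (Cyl p ℓ c) := by rw [hmap]
    _ = μ ((fun x : odometer p => g + x) ⁻¹' (Cyl p ℓ c)) :=
        Measure.map_apply (measurable_translate g) (Cyl_measurable p ℓ c)
    _ = μ (Cyl p ℓ d) := by rw [hpre]

lemma Cyl_measure (hpos : ∀ ℓ, 0 < p ℓ) (μ : Measure (odometer p))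
    (hμ : μ.IsAddHaarMeasure) (hμ1 : IsProbabilityMeasure μ) (ℓ : ℕ) (c : ZMod (p ℓ)) :
    μ (Cyl p ℓ c) = ((p ℓ : ℝ≥0∞))⁻¹ := by
  haveI : NeZero (p ℓ) := ⟨(hpos ℓ).ne'⟩
  have hcover : ⋃ d : ZMod (p ℓ), Cyl p ℓ d = Set.univ := by
    rw [Set.eq_univ_iff_forall]
    exact fun x => Set.mem_iUnion.mpr ⟨(x : Π j, ZMod (p j)) ℓ, rfl⟩
  have hdisj : Pairwise (Function.onFun Disjoint fun d => Cyl p ℓ d) := by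
    intro a b hab
    rw [Function.onFun, Set.disjoint_left]
    rintro x hxa hxb
    exact hab (hxa.symm.trans hxb)
  have hsum : μ Set.univ = ∑' d : ZMod (p ℓ), μ (Cyl p ℓ d) := by
    rw [← hcover]
    exact measure_iUnion hdisj (fun d => Cyl_measurable p ℓ d)
  rw [measure_univ, tsum_fintype] at hsum
  have heq : ∀ d : ZMod (p ℓ), μ (Cyl p ℓ d) = μ (Cyl p ℓ c) :=
    fun d => Cyl_measure_eq μ hμ ℓ d c
  rw [Finset.sum_congr rfl (fun d _ => heq d), Finset.sum_const, Finset.card_univ,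
    ZMod.card] at hsum
  have hp0 : ((p ℓ : ℝ≥0∞)) ≠ 0 := by
    exact_mod_cast Nat.cast_ne_zero.mpr (hpos ℓ).ne'
  have hptop : ((p ℓ : ℝ≥0∞)) ≠ ⊤ := ENNReal.natCast_ne_top _
  have : ((p ℓ : ℝ≥0∞)) * μ (Cyl p ℓ c) = 1 := by
    rw [← nsmul_eq_mul, ← hsum]
  calc μ (Cyl p ℓ c) = (p ℓ : ℝ≥0∞)⁻¹ * ((p ℓ : ℝ≥0∞) * μ (Cyl p ℓ c)) := by
        rw [← mul_assoc, ENNReal.inv_mul_cancel hp0 hptop, one_mul]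
    _ = (p ℓ : ℝ≥0∞)⁻¹ := by rw [this, mul_one]

end Meas

section Esets

open scoped ENNReal

variable {ξ : ℤ → Fin 2} {p : ℕ → ℕ}

/-- image of the skeleton in `ZMod (p ℓ)` -/
def AsetU (ξ : ℤ → Fin 2) (p : ℕ → ℕ) (ℓ : ℕ) : Set (ZMod (p ℓ)) :=
  (fun k : ℤ => (k : ZMod (p ℓ))) '' Per ξ (p ℓ)

lemma EL_eq (ξ : ℤ → Fin 2) (p : ℕ → ℕ) (ℓ : ℕ) :
    UsetL ξ p ℓ ∪ VsetL ξ p ℓ = {x : odometer p | (x : Π j, ZMod (p j)) ℓ ∈ AsetU ξ p ℓ} := by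
  ext x
  simp only [UsetL, VsetL, Aset, AsetU, Set.mem_union, Set.mem_setOf_eq, Set.mem_image]
  constructor
  · rintro (⟨k, hk, _, hkc⟩ | ⟨k, hk, _, hkc⟩) <;> exact ⟨k, hk, hkc⟩
  · rintro ⟨k, hk, hkc⟩
    rcases fin2_cases (ξ k) with h | h
    · exact Or.inr ⟨k, hk, h, hkc⟩
    · exact Or.inl ⟨k, hk, h, hkc⟩

lemma AsetU_ncard (hpos : ∀ ℓ, 0 < p ℓ) (ℓ : ℕ) :
    (AsetU ξ p ℓ).ncard = (Per ξ (p ℓ) ∩ Set.Ico (0 : ℤ) (p ℓ : ℤ)).ncard := by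
  have hppos : (0 : ℤ) < (p ℓ : ℤ) := by exact_mod_cast hpos ℓ
  have himg : AsetU ξ p ℓ
      = (fun k : ℤ => (k : ZMod (p ℓ))) '' (Per ξ (p ℓ) ∩ Set.Ico (0 : ℤ) (p ℓ : ℤ)) := by
    apply Set.Subset.antisymm
    · rintro c ⟨k, hk, rfl⟩
      refine ⟨k % (p ℓ), ⟨?_, Int.emod_nonneg k hppos.ne', Int.emod_lt_of_pos k hppos⟩, ?_⟩
      · have : k % (p ℓ : ℤ) = k + (-(k / (p ℓ : ℤ))) * (p ℓ : ℤ) := by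
          rw [Int.emod_def]; ring
        rw [this]
        exact (per_add_mul hk _).1
      · exact ZMod.intCast_mod k (p ℓ)
    · exact Set.image_mono Set.inter_subset_left
  rw [himg]
  apply Set.ncard_image_of_injOn
  rintro k ⟨_, hk0, hk1⟩ k' ⟨_, hk0', hk1'⟩ h
  have hd : ((p ℓ : ℤ)) ∣ k' - k := ((ZMod.intCast_eq_intCast_iff _ _ _).mp h).dvd
  have := Int.eq_zero_of_abs_lt_dvd hd (abs_lt.mpr ⟨by omega, by omega⟩)
  omega

lemma EL_measurable (ξ : ℤ → Fin 2) (p : ℕ → ℕ) (ℓ : ℕ) :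
    MeasurableSet (UsetL ξ p ℓ ∪ VsetL ξ p ℓ) := by
  rw [EL_eq]
  exact proj_measurable p ℓ (show MeasurableSet (AsetU ξ p ℓ) from trivial)

lemma EL_measure (hpos : ∀ ℓ, 0 < p ℓ) (μ : Measure (odometer p))
    (hμ : μ.IsAddHaarMeasure) (hμ1 : IsProbabilityMeasure μ) (ℓ : ℕ) :
    μ (UsetL ξ p ℓ ∪ VsetL ξ p ℓ)
      = ((Per ξ (p ℓ) ∩ Set.Ico (0 : ℤ) (p ℓ : ℤ)).ncard : ℝ≥0∞) * (p ℓ : ℝ≥0∞)⁻¹ := by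
  haveI : NeZero (p ℓ) := ⟨(hpos ℓ).ne'⟩
  have hfin : (AsetU ξ p ℓ).Finite := Set.toFinite _
  have hE : UsetL ξ p ℓ ∪ VsetL ξ p ℓ = ⋃ c ∈ hfin.toFinset, Cyl p ℓ c := by
    rw [EL_eq]
    ext x
    simp only [Set.mem_setOf_eq, Set.mem_iUnion, Set.Finite.mem_toFinset, Cyl,
      Set.mem_setOf_eq]
    constructor
    · intro h; exact ⟨_, h, rfl⟩
    · rintro ⟨c, hc, rfl⟩; exact hc
  rw [hE, measure_biUnion_finset ?_ (fun c _ => Cyl_measurable p ℓ c)]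
  · rw [Finset.sum_congr rfl (fun c _ => Cyl_measure hpos μ hμ hμ1 ℓ c), Finset.sum_const,
      nsmul_eq_mul, ← Set.ncard_eq_toFinset_card _ hfin, AsetU_ncard hpos]
  · intro a _ b _ hab
    simp only [Function.onFun]
    rw [Set.disjoint_left]
    rintro x hxa hxb
    exact hab (hxa.symm.trans hxb)

lemma EL_mono (hdvd : ∀ ℓ, p ℓ ∣ p (ℓ + 1)) :
    Monotone (fun ℓ => UsetL ξ p ℓ ∪ VsetL ξ p ℓ) := by
  apply monotone_nat_of_le_succ
  intro ℓ
  rw [EL_eq, EL_eq]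
  rintro x ⟨k, hk, hkc⟩
  obtain ⟨k', hk'⟩ := ZMod.intCast_surjective ((x : Π j, ZMod (p j)) (ℓ + 1))
  have h1 : (k' : ZMod (p ℓ)) = (x : Π j, ZMod (p j)) ℓ :=
    cast_coord hdvd x (Nat.le_succ ℓ) hk'
  have h2 : k' ∈ Per ξ (p ℓ) := (cast_eq_cast_iff_per hk (hkc.trans h1.symm)).1
  exact ⟨k', Per.mono (hdvd ℓ) h2, hk'⟩

lemma E_union (ξ : ℤ → Fin 2) (p : ℕ → ℕ) :
    ⋃ ℓ, (UsetL ξ p ℓ ∪ VsetL ξ p ℓ) = Uset ξ p ∪ Vset ξ p := by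
  rw [Uset, Vset, ← Set.iUnion_union_distrib]

end Esets

/-- A non-periodic Toeplitz sequence `ξ` with period structure
`(p ℓ)` is regular (`lim_ℓ D(p ℓ) = 1`) if and only if the boundary of the window
`W = cl U` has Haar measure zero. -/
theorem toeplitz_regular_iff_null_boundary (ξ : ℤ → Fin 2) (hT : IsToeplitz ξ)
    (hNP : IsNonPeriodic ξ) (p : ℕ → ℕ) (hps : IsPeriodStructure ξ p)
    (μ : Measure (odometer p)) (hμ : μ.IsAddHaarMeasure) (hμ1 : IsProbabilityMeasure μ) :
    Tendsto (fun ℓ => skelDensity ξ (p ℓ)) atTop (𝓝 1) ↔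
      μ (frontier (Wset ξ p)) = 0 := by
  obtain ⟨hpos, hdvd, hexh⟩ := hps
  have hmeasE : ∀ ℓ, MeasurableSet (UsetL ξ p ℓ ∪ VsetL ξ p ℓ) := EL_measurable ξ p
  have hmono : Monotone (fun ℓ => UsetL ξ p ℓ ∪ VsetL ξ p ℓ) := EL_mono hdvd
  have htend : Tendsto (fun ℓ => μ (UsetL ξ p ℓ ∪ VsetL ξ p ℓ)) atTop
      (𝓝 (μ (⋃ ℓ, (UsetL ξ p ℓ ∪ VsetL ξ p ℓ)))) := tendsto_measure_iUnion_atTop hmono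
  have hfinite : μ (⋃ ℓ, (UsetL ξ p ℓ ∪ VsetL ξ p ℓ)) ≠ ⊤ := measure_ne_top μ _
  have hEd : ∀ ℓ, (μ (UsetL ξ p ℓ ∪ VsetL ξ p ℓ)).toReal = skelDensity ξ (p ℓ) := by
    intro ℓ
    rw [EL_measure hpos μ hμ hμ1 ℓ, ENNReal.toReal_mul, ENNReal.toReal_inv]
    simp [skelDensity, div_eq_mul_inv]
  have htendR : Tendsto (fun ℓ => skelDensity ξ (p ℓ)) atTop
      (𝓝 ((μ (⋃ ℓ, (UsetL ξ p ℓ ∪ VsetL ξ p ℓ))).toReal)) := by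
    have := (ENNReal.tendsto_toReal_iff (fun ℓ => measure_ne_top μ _) hfinite).mpr htend
    simpa only [hEd] using this
  have hfr : μ (frontier (Wset ξ p)) = μ ((⋃ ℓ, (UsetL ξ p ℓ ∪ VsetL ξ p ℓ))ᶜ) := by
    rw [frontier_Wset hpos hdvd hexh, E_union]
  have hmeasU : MeasurableSet (⋃ ℓ, (UsetL ξ p ℓ ∪ VsetL ξ p ℓ)) := MeasurableSet.iUnion hmeasE
  rw [hfr, prob_compl_eq_zero_iff hmeasU]
  constructor
  · intro h
    exact (ENNReal.toReal_eq_one_iff _).mp (tendsto_nhds_unique htendR h)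
  · intro h
    rw [h] at htendR
    simpa using htendR
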